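/- For the sequence s_n with s₁ = 0 and s_{n+1} − s_n = μ e^{−s_{n+1}} (μ > 0), one has the lower bound s_n > ψ(n + 1 + μ^{−1}e^{−μ}) − ψ(2 + μ^{−1}e^{−μ}) for all n ≥ 2, where ψ is the digamma function; consequently s_n = log(μn) + O(1) as n → ∞. -/

import Mathlib

/-- The digamma function `ψ = Γ'/Γ`, as the derivative of `log ∘ Γ`. -/
noncomputable def digamma (x : ℝ) : ℝ :=
  deriv (fun y => Real.log (Real.Gamma y)) x

open Real Filter Topology in
lemma digamma_add_one {x : ℝ} (hx : 0 < x) : digamma (x + 1) = digamma x + 1 / x := by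
  have hder : ∀ {y : ℝ}, 0 < y → DifferentiableAt ℝ (fun z => Real.log (Real.Gamma z)) y := by
    intro y hy
    exact (Real.differentiableAt_Gamma fun m =>
      ne_of_gt (lt_of_le_of_lt (neg_nonpos.mpr m.cast_nonneg) hy)).log
      (Real.Gamma_pos_of_pos hy).ne'
  unfold digamma
  rw [← deriv_comp_add_const (fun z => Real.log (Real.Gamma z)) 1 x, one_div, ← Real.deriv_log,
    ← deriv_add (hder hx) (Real.differentiableAt_log hx.ne')]
  apply EventuallyEq.deriv_eq
  filter_upwards [eventually_gt_nhds hx] with y hy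
  simp only [Real.Gamma_add_one hy.ne', Real.log_mul hy.ne' (Real.Gamma_pos_of_pos hy).ne',
    add_comm]
  rfl

lemma sum_inv_eq_digamma {c : ℝ} (hc : 0 < c) (n : ℕ) (hn : 1 ≤ n) :
    ∑ r ∈ Finset.Icc 2 n, (1 : ℝ) / (r + c) = digamma (n + 1 + c) - digamma (2 + c) := by
  induction n, hn using Nat.le_induction with
  | base => norm_num
  | succ n hn ih =>
    rw [Finset.sum_Icc_succ_top (by omega : 2 ≤ n + 1), ih]
    have hx : (0 : ℝ) < n + 1 + c := by positivity
    have := digamma_add_one hx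
    push_cast
    rw [show (n : ℝ) + 1 + 1 + c = (n + 1 + c) + 1 by ring, this]
    ring

lemma log_succ_sub {x : ℝ} (hx : 0 < x) : Real.log (x + 1) - Real.log x ≤ 1 / x := by
  rw [← Real.log_div (by positivity) hx.ne']
  have h := Real.log_le_sub_one_of_pos (x := (x + 1) / x) (by positivity)
  have h2 : (x + 1) / x - 1 = 1 / x := by field_simp; ring
  linarith

/-- Lower bound for the implicit sequence `s₁ = 0`, `s_{n+1} − s_n = μe^{−s_{n+1}}`:
`s_n > ψ(n+1+μ⁻¹e^{−μ}) − ψ(2+μ⁻¹e^{−μ})` for `n ≥ 2`; consequently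
`s_n = log(μn) + O(1)` as `n → ∞`. -/
theorem stmt13 (μ : ℝ) (hμ : 0 < μ) (s : ℕ → ℝ)
    (hs1 : s 1 = 0)
    (hrec : ∀ n : ℕ, 1 ≤ n → s (n+1) - s n = μ * Real.exp (-(s (n+1)))) :
    (∀ n : ℕ, 2 ≤ n →
      s n > digamma (n + 1 + Real.exp (-μ) / μ) - digamma (2 + Real.exp (-μ) / μ)) ∧
    ∃ C : ℝ, ∀ n : ℕ, 1 ≤ n → |s n - Real.log (μ * n)| ≤ C := by
  set c : ℝ := Real.exp (-μ) / μ with hc_def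
  have hc : 0 < c := by positivity
  -- strict monotonicity
  have hmono : ∀ n : ℕ, 1 ≤ n → s n < s (n + 1) := by
    intro n hn
    have h := hrec n hn
    nlinarith [Real.exp_pos (-(s (n + 1)))]
  -- upper bound: exp (s n) < μ n + exp (-μ)
  have hub : ∀ n : ℕ, 1 ≤ n → Real.exp (s n) < μ * n + Real.exp (-μ) := by
    intro n hn
    induction n, hn using Nat.le_induction with
    | base =>
      rw [hs1, Real.exp_zero]
      have := Real.add_one_lt_exp (x := -μ) (by linarith)
      push_cast; linarith
    | succ n hn ih =>
      have hstep : Real.exp (s (n + 1)) < Real.exp (s n) + μ := by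
        have hab : s n < s (n + 1) := hmono n hn
        have h1 : s n - s (n + 1) + 1 < Real.exp (s n - s (n + 1)) :=
          Real.add_one_lt_exp (by linarith)
        have h2 : Real.exp (s n - s (n + 1)) * Real.exp (s (n + 1)) = Real.exp (s n) := by
          rw [← Real.exp_add]; ring_nf
        have h3 : Real.exp (s (n + 1)) * Real.exp (-(s (n + 1))) = 1 := by
          rw [← Real.exp_add]; simp
        have h4 := hrec n hn
        nlinarith [Real.exp_pos (s (n + 1))]
      push_cast
      linarith
  -- telescoping sum
  have hsum : ∀ n : ℕ, 1 ≤ n → s n = μ * ∑ r ∈ Finset.Icc 2 n, Real.exp (-(s r)) := by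
    intro n hn
    induction n, hn using Nat.le_induction with
    | base => simp [hs1]
    | succ n hn ih =>
      rw [Finset.sum_Icc_succ_top (by omega : 2 ≤ n + 1), mul_add, ← ih]
      have := hrec n hn
      linarith
  -- termwise bound: 1/(r+c) < μ exp(-(s r))
  have hterm : ∀ r : ℕ, 1 ≤ r → 1 / (r + c) < μ * Real.exp (-(s r)) := by
    intro r hr
    have h1 : (0 : ℝ) < Real.exp (s r) := Real.exp_pos _
    have h2 := hub r hr
    have h0 : (0 : ℝ) < μ * r + Real.exp (-μ) := by positivity
    have heq2 : (r : ℝ) + c = (μ * r + Real.exp (-μ)) / μ := by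
      rw [hc_def, add_div, mul_div_cancel_left₀ _ hμ.ne']
    have h7 : μ * Real.exp (-(s r)) = μ / Real.exp (s r) := by
      rw [Real.exp_neg, div_eq_mul_inv]
    rw [heq2, one_div_div, h7]
    exact div_lt_div_of_pos_left hμ h1 h2

  -- strict lower bound by the partial fraction sum
  have hlow : ∀ n : ℕ, 2 ≤ n → (∑ r ∈ Finset.Icc 2 n, 1 / ((r : ℝ) + c)) < s n := by
    intro n hn
    rw [hsum n (by omega), Finset.mul_sum]
    refine Finset.sum_lt_sum_of_nonempty (Finset.nonempty_Icc.mpr hn) ?_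
    intro r hr
    exact hterm r (by have := (Finset.mem_Icc.mp hr).1; omega)
  constructor
  · intro n hn
    have := hlow n hn
    rw [sum_inv_eq_digamma hc n (by omega)] at this
    exact this
  -- the O(1) estimate
  · -- log lower bound for the partial sums
    have hlogsum : ∀ n : ℕ, 1 ≤ n →
        Real.log ((n : ℝ) + 1 + c) - Real.log (2 + c) ≤ ∑ r ∈ Finset.Icc 2 n, 1 / ((r : ℝ) + c) := by
      intro n hn
      induction n, hn using Nat.le_induction with
      | base => norm_num
      | succ n hn ih =>
        rw [Finset.sum_Icc_succ_top (by omega : 2 ≤ n + 1)]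
        have hx : (0 : ℝ) < (n : ℝ) + 1 + c := by positivity
        have := log_succ_sub hx
        push_cast
        have he : (n : ℝ) + 1 + 1 + c = ((n : ℝ) + 1 + c) + 1 := by ring
        rw [he]
        linarith
    -- lower bound for s n
    have hsl : ∀ n : ℕ, 1 ≤ n → Real.log n - Real.log (2 + c) ≤ s n := by
      intro n hn
      rcases eq_or_lt_of_le hn with h1 | h2
      · rw [← h1]
        simp only [Nat.cast_one, Real.log_one, hs1]
        have : (0 : ℝ) ≤ Real.log (2 + c) := Real.log_nonneg (by linarith)
        linarith
      · have hn2 : 2 ≤ n := h2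
        have h3 := hlogsum n hn
        have h4 := hlow n hn2
        have h5 : Real.log n ≤ Real.log ((n : ℝ) + 1 + c) :=
          Real.log_le_log (by positivity) (by linarith)
        linarith
    -- upper bound for s n
    have hsu : ∀ n : ℕ, 1 ≤ n → s n ≤ Real.log (μ * n) + c := by
      intro n hn
      have hn0 : (0 : ℝ) < n := by exact_mod_cast Nat.pos_of_ne_zero (by omega)
      have h1 := hub n hn
      have h2 : s n < Real.log (μ * n + Real.exp (-μ)) :=
        (Real.lt_log_iff_exp_lt (by positivity)).mpr h1
      have h3 : Real.log (μ * n + Real.exp (-μ)) - Real.log (μ * n) ≤ c := by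
        have hp : (0 : ℝ) < μ * n := by positivity
        have h4 := Real.log_le_sub_one_of_pos (x := (μ * n + Real.exp (-μ)) / (μ * n))
          (by positivity)
        rw [Real.log_div (by positivity) hp.ne'] at h4
        have h5 : (μ * n + Real.exp (-μ)) / (μ * n) - 1 = c / n := by
          rw [hc_def]; field_simp; ring
        rw [h5] at h4
        have hn1 : (1 : ℝ) ≤ n := by exact_mod_cast hn
        have h6 : c / n ≤ c := by
          rw [div_le_iff₀ hn0]; nlinarith [hc.le]
        linarith
      linarith
    refine ⟨c + |Real.log μ| + Real.log (2 + c), fun n hn => ?_⟩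
    have hn0 : (0 : ℝ) < n := by exact_mod_cast Nat.pos_of_ne_zero (by omega)
    have hlm : Real.log (μ * n) = Real.log μ + Real.log n :=
      Real.log_mul hμ.ne' hn0.ne'
    have h1 := hsl n hn
    have h2 := hsu n hn
    have h3 : Real.log μ ≤ |Real.log μ| := le_abs_self _
    have h4 : (0 : ℝ) ≤ Real.log (2 + c) := Real.log_nonneg (by linarith)
    have h5 : (0 : ℝ) ≤ |Real.log μ| := abs_nonneg _
    rw [abs_le]
    constructor <;> [skip; linarith]
    rw [hlm]
    linarith
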